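/- For any graph G, any edge e of G, and any ℓ ≥ 0, the ℓ-leaky forcing numbers satisfy −2 ≤ Z_{(ℓ)}(G) − Z_{(ℓ)}(G − e) ≤ 2. -/
import Mathlib


open SimpleGraph

namespace LF

variable {V : Type*}

/-- Vertices eventually forced blue, starting from `S`, with leak set `L`:
a blue vertex not in `L` whose every neighbor other than `w` is blue forces `w`. -/
inductive Forced (G : SimpleGraph V) (L S : Set V) : V → Prop
  | init (v : V) (hv : v ∈ S) : Forced G L S v
  | force (b w : V) (hb : Forced G L S b) (hbL : b ∉ L) (hadj : G.Adj b w)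
      (hall : ∀ u, G.Adj b u → u ≠ w → Forced G L S u) : Forced G L S w

/-- `S` is an ℓ-leaky forcing set of `G`. -/
def IsLeakyForcingSet (G : SimpleGraph V) (ℓ : ℕ) (S : Set V) : Prop :=
  ∀ L : Set V, L.ncard ≤ ℓ → ∀ v, Forced G L S v

/-- The ℓ-leaky forcing number `Z_{(ℓ)}(G)`. -/
noncomputable def leakyForcingNumber (G : SimpleGraph V) [Fintype V] (ℓ : ℕ) : ℕ :=
  sInf {k | ∃ S : Finset V, S.card = k ∧ IsLeakyForcingSet G ℓ ↑S}

/-- An ℓ-leaky fort: a nonempty set `F` such that at most ℓ vertices outside `F`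
have exactly one neighbor in `F`. -/
def IsLeakyFort (G : SimpleGraph V) (ℓ : ℕ) (F : Set V) : Prop :=
  F.Nonempty ∧ {v | v ∉ F ∧ ∃! u, u ∈ F ∧ G.Adj v u}.ncard ≤ ℓ

/-- The path graph on `n` vertices. -/
def pathGraph (n : ℕ) : SimpleGraph (Fin n) :=
  SimpleGraph.fromRel (fun i j => i.val + 1 = j.val)

/-- The cycle graph on `n` vertices. -/
def cycleGraph (n : ℕ) : SimpleGraph (Fin n) :=
  SimpleGraph.fromRel (fun i j => (i.val + 1) % n = j.val)

/-- The star graph on `n` vertices, with center `0`. -/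
def starGraph (n : ℕ) : SimpleGraph (Fin n) :=
  SimpleGraph.fromRel (fun i _ => i.val = 0)

/-- The generalized Petersen graph `P(n,k)`: `Sum.inl i` is the inner vertex `x_{i+1}`,
`Sum.inr i` is the outer vertex `y_{i+1}` (0-indexed). -/
def petersen (n k : ℕ) : SimpleGraph (Fin n ⊕ Fin n) :=
  SimpleGraph.fromRel (fun a b =>
    match a, b with
    | Sum.inr i, Sum.inr j => (i.val + 1) % n = j.val
    | Sum.inl i, Sum.inr j => i = j
    | Sum.inl i, Sum.inl j => (i.val + k) % n = j.val
    | _, _ => False)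

end LF

open LF in
lemma forced_transfer {V : Type*} {G G' : SimpleGraph V} (a b : V)
    (h1 : ∀ x y, G.Adj x y → (G'.Adj x y ∨ (x = a ∧ y = b) ∨ (x = b ∧ y = a)))
    (h2 : ∀ x y, G'.Adj x y → (G.Adj x y ∨ (x = a ∧ y = b) ∨ (x = b ∧ y = a)))
    {L S : Set V} {v : V} (hv : Forced G L S v) :
    Forced G' L (insert a (insert b S)) v := by
  induction hv with
  | init w hw => exact Forced.init w (by simp [hw])
  | force c w hc hcL hadj hall ih ihall =>
    rcases h1 c w hadj with hadj' | ⟨rfl, rfl⟩ | ⟨rfl, rfl⟩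
    · refine Forced.force c w ih hcL hadj' ?_
      intro u hu hne
      rcases h2 c u hu with hu' | ⟨rfl, rfl⟩ | ⟨rfl, rfl⟩
      · exact ihall u hu' hne
      · exact Forced.init _ (by simp)
      · exact Forced.init _ (by simp)
    · exact Forced.init _ (by simp)
    · exact Forced.init _ (by simp)

open LF in
lemma lfn_le {V : Type*} [Fintype V] {G G' : SimpleGraph V} (ℓ : ℕ) (a b : V)
    (htrans : ∀ S : Set V, IsLeakyForcingSet G ℓ S →
      IsLeakyForcingSet G' ℓ (insert a (insert b S))) :
    leakyForcingNumber G' ℓ ≤ leakyForcingNumber G ℓ + 2 := by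
  classical
  have hne : {k | ∃ S : Finset V, S.card = k ∧ IsLeakyForcingSet G ℓ ↑S}.Nonempty := by
    refine ⟨(Finset.univ : Finset V).card, Finset.univ, rfl, ?_⟩
    intro L hL v
    exact Forced.init v (by simp)
  obtain ⟨S, hScard, hSf⟩ := Nat.sInf_mem hne
  have hS' : IsLeakyForcingSet G' ℓ ↑(insert a (insert b S)) := by
    have := htrans (↑S) hSf
    simpa using this
  calc leakyForcingNumber G' ℓ ≤ (insert a (insert b S)).card :=
        Nat.sInf_le ⟨insert a (insert b S), rfl, hS'⟩
    _ ≤ S.card + 2 := by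
        calc (insert a (insert b S)).card ≤ (insert b S).card + 1 :=
              Finset.card_insert_le _ _
          _ ≤ S.card + 1 + 1 := by
              exact Nat.add_le_add_right (Finset.card_insert_le _ _) 1
          _ = S.card + 2 := rfl
    _ = leakyForcingNumber G ℓ + 2 := by rw [hScard, leakyForcingNumber]

theorem stmt14 {V : Type*} [Fintype V] (G : SimpleGraph V) (ℓ : ℕ) (a b : V)
    (hab : G.Adj a b) :
    -2 ≤ (LF.leakyForcingNumber G ℓ : ℤ) -
        LF.leakyForcingNumber (G.deleteEdges {s(a, b)}) ℓ ∧
    (LF.leakyForcingNumber G ℓ : ℤ) -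
        LF.leakyForcingNumber (G.deleteEdges {s(a, b)}) ℓ ≤ 2 := by
  set G' := G.deleteEdges {s(a, b)} with hG'
  have h12 : ∀ x y, G.Adj x y → (G'.Adj x y ∨ (x = a ∧ y = b) ∨ (x = b ∧ y = a)) := by
    intro x y hxy
    by_cases h : s(x, y) = s(a, b)
    · right; exact Sym2.eq_iff.mp h
    · left
      rw [hG', SimpleGraph.deleteEdges_adj]
      exact ⟨hxy, by simpa using h⟩
  have h21 : ∀ x y, G'.Adj x y → G.Adj x y := fun x y h => h.1
  have hA : LF.leakyForcingNumber G' ℓ ≤ LF.leakyForcingNumber G ℓ + 2 := by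
    refine lfn_le ℓ a b ?_
    intro S hS L hL v
    exact forced_transfer a b h12 (fun x y h => Or.inl (h21 x y h)) (hS L hL v)
  have hB : LF.leakyForcingNumber G ℓ ≤ LF.leakyForcingNumber G' ℓ + 2 := by
    refine lfn_le ℓ a b ?_
    intro S hS L hL v
    exact forced_transfer a b (fun x y h => Or.inl (h21 x y h)) h12 (hS L hL v)
  omega
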